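/- Let k, n, m : ℝ → ℝ be differentiable, let V = k − n² − m² be positive everywhere, and suppose there exist constants μ ≠ 0 and c_k, c_m, c_n such that V = k'/(μk + c_k) = m'/(μm + c_m) = n'/(μn + c_n) everywhere (with the denominators nonvanishing). Then m and n are affine functions of k: there exist constants a_m, b_m, a_n, b_n with m = a_m·k + b_m and n = a_n·k + b_n. -/

import Mathlib

lemma aux_affine (k m : ℝ → ℝ) (hk : Differentiable ℝ k) (hm : Differentiable ℝ m)
    (V : ℝ → ℝ) (μ ck cm : ℝ) (hμ : μ ≠ 0)
    (hdk : ∀ x, μ * k x + ck ≠ 0) (hdm : ∀ x, μ * m x + cm ≠ 0)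
    (h1 : ∀ x, deriv k x = V x * (μ * k x + ck))
    (h2 : ∀ x, deriv m x = V x * (μ * m x + cm)) :
    ∃ a b : ℝ, ∀ x, m x = a * k x + b := by
  set f : ℝ → ℝ := fun x => (μ * m x + cm) / (μ * k x + ck) with hf_def
  have hg : ∀ x, HasDerivAt (fun x => μ * m x + cm) (μ * deriv m x) x :=
    fun x => ((hm x).hasDerivAt.const_mul μ).add_const cm
  have hh : ∀ x, HasDerivAt (fun x => μ * k x + ck) (μ * deriv k x) x :=
    fun x => ((hk x).hasDerivAt.const_mul μ).add_const ck
  have hf : ∀ x, HasDerivAt f 0 x := by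
    intro x
    have h := (hg x).div (hh x) (hdk x)
    refine h.congr_deriv (Eq.symm ?_)
    rw [h1, h2, eq_comm, div_eq_zero_iff]
    left
    ring
  have hc : ∀ x, f x = f 0 :=
    fun x => is_const_of_deriv_eq_zero (fun y => (hf y).differentiableAt)
      (fun y => (hf y).deriv) x 0
  refine ⟨f 0, (f 0 * ck - cm) / μ, fun x => ?_⟩
  have h := hc x
  rw [hf_def] at h
  simp only at h
  rw [div_eq_iff (hdk x)] at h
  field_simp
  nlinarith [h]

theorem stmt_8 (k n m : ℝ → ℝ) (hk : Differentiable ℝ k) (hn : Differentiable ℝ n)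
    (hm : Differentiable ℝ m) (V : ℝ → ℝ) (hV : ∀ x, V x = k x - (n x)^2 - (m x)^2)
    (hVpos : ∀ x, 0 < V x) (μ ck cm cn : ℝ) (hμ : μ ≠ 0)
    (hdk : ∀ x, μ * k x + ck ≠ 0) (hdm : ∀ x, μ * m x + cm ≠ 0)
    (hdn : ∀ x, μ * n x + cn ≠ 0)
    (h1 : ∀ x, V x = deriv k x / (μ * k x + ck))
    (h2 : ∀ x, V x = deriv m x / (μ * m x + cm))
    (h3 : ∀ x, V x = deriv n x / (μ * n x + cn)) :
    ∃ am bm an bn : ℝ, ∀ x, m x = am * k x + bm ∧ n x = an * k x + bn := by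
  have hk' : ∀ x, deriv k x = V x * (μ * k x + ck) := fun x => by
    rw [h1 x, div_mul_cancel₀ _ (hdk x)]
  have hm' : ∀ x, deriv m x = V x * (μ * m x + cm) := fun x => by
    rw [h2 x, div_mul_cancel₀ _ (hdm x)]
  have hn' : ∀ x, deriv n x = V x * (μ * n x + cn) := fun x => by
    rw [h3 x, div_mul_cancel₀ _ (hdn x)]
  obtain ⟨am, bm, hM⟩ := aux_affine k m hk hm V μ ck cm hμ hdk hdm hk' hm'
  obtain ⟨an, bn, hN⟩ := aux_affine k n hk hn V μ ck cn hμ hdk hdn hk' hn'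
  exact ⟨am, bm, an, bn, fun x => ⟨hM x, hN x⟩⟩
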